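/- Let V be a real inner product space of dimension 2m ≥ 6 with an orthogonal complex structure J, and let R be a curvature-like tensor on V such that R(X,Y,JX,JY) = 0 for all orthonormal X, Y ∈ V with ⟨X,JY⟩ = 0. Then the following are equivalent: (i) (constant type) λ(X,Y) = λ(X,Z) for all X, Y, Z ∈ V with ⟨X,Y⟩ = ⟨X,JY⟩ = 0, ⟨X,Z⟩ = ⟨X,JZ⟩ = 0 and ‖Y‖ = ‖Z‖; (ii) (constant anti-holomorphic sectional curvature) there exists α ∈ ℝ such that K(X,Y) = α for all orthonormal X, Y ∈ V with ⟨X,JY⟩ = 0. Moreover, when these hold, λ(X,Y) = α for every orthonormal pair X, Y with ⟨X,JY⟩ = 0; that is, the value of the constant type equals the constant anti-holomorphic sectional curvature. (This is the pointwise algebraic content of Theorem 4.1: an almost Hermitian manifold of dimension 2m ≥ 6 satisfying the axiom of co-holomorphic (2n+1)-spheres has pointwise constant type α if and only if it has pointwise constant anti-holomorphic sectional curvature α, the hypothesis R(X,Y,JX,JY) = 0 on anti-holomorphic pairs being what the axiom yields via Lemma 4.1.) -/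

import Mathlib

open scoped RealInnerProductSpace

private lemma exists_unit_orth {V : Type*} [NormedAddCommGroup V] [InnerProductSpace ℝ V]
    [FiniteDimensional ℝ V] (hd : 5 ≤ Module.finrank ℝ V) (a b c d : V) :
    ∃ v : V, ‖v‖ = 1 ∧ ⟪a, v⟫ = 0 ∧ ⟪b, v⟫ = 0 ∧ ⟪c, v⟫ = 0 ∧ ⟪d, v⟫ = 0 := by
  classical
  set K := Submodule.span ℝ ({a, b, c, d} : Set V) with hK
  have hKle : Module.finrank ℝ K ≤ 4 := by
    have h1 : Module.finrank ℝ K ≤ (({a,b,c,d} : Set V).toFinset).card := by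
      have := finrank_span_le_card (R := ℝ) ({a,b,c,d} : Set V)
      simpa [hK] using this
    have h2 : (({a,b,c,d} : Set V).toFinset).card ≤ 4 := by
      simp only [Set.toFinset_insert, Set.toFinset_singleton]
      refine le_trans (Finset.card_insert_le _ _) ?_
      refine Nat.succ_le_succ (le_trans (Finset.card_insert_le _ _) ?_)
      refine Nat.succ_le_succ (le_trans (Finset.card_insert_le _ _) ?_)
      simp
    omega
  have horth := Submodule.finrank_add_finrank_orthogonal (K := K)
  have hbot : Kᗮ ≠ ⊥ := by
    intro h
    rw [h] at horth
    simp [finrank_bot] at horth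
    omega
  obtain ⟨v, hv, hv0⟩ := Submodule.exists_mem_ne_zero_of_ne_bot hbot
  refine ⟨‖v‖⁻¹ • v, norm_smul_inv_norm hv0, ?_, ?_, ?_, ?_⟩ <;>
  · rw [inner_smul_right,
      Submodule.inner_right_of_mem_orthogonal (K := K) (Submodule.subset_span (by simp)) hv]
    ring

/-- **Pointwise algebraic content of Theorem 4.1.** -/
theorem constant_type_iff_constant_antiholomorphic_sectional_curvature
    {V : Type*} [NormedAddCommGroup V] [InnerProductSpace ℝ V] [FiniteDimensional ℝ V]
    {m : ℕ} (hm : 3 ≤ m) (hdim : Module.finrank ℝ V = 2 * m)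
    (J : V →ₗ[ℝ] V)
    (hJiso : ∀ X Y : V, ⟪J X, J Y⟫ = ⟪X, Y⟫)
    (hJ2 : ∀ X : V, J (J X) = -X)
    (R : V →ₗ[ℝ] V →ₗ[ℝ] V →ₗ[ℝ] V →ₗ[ℝ] ℝ)
    (hR1 : ∀ X Y Z U : V, R X Y Z U = -R Y X Z U)
    (hR2 : ∀ X Y Z U : V, R X Y Z U = -R X Y U Z)
    (hR3 : ∀ X Y Z U : V, R X Y Z U = R Z U X Y)
    (hax : ∀ X Y : V, ‖X‖ = 1 → ‖Y‖ = 1 → ⟪X, Y⟫ = 0 → ⟪X, J Y⟫ = 0 →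
      R X Y (J X) (J Y) = 0) :
    ((∀ X Y Z : V, ⟪X, Y⟫ = 0 → ⟪X, J Y⟫ = 0 → ⟪X, Z⟫ = 0 → ⟪X, J Z⟫ = 0 → ‖Y‖ = ‖Z‖ →
        R X Y X Y - R X Y (J X) (J Y) = R X Z X Z - R X Z (J X) (J Z)) ↔
      (∃ α : ℝ, ∀ X Y : V, ‖X‖ = 1 → ‖Y‖ = 1 → ⟪X, Y⟫ = 0 → ⟪X, J Y⟫ = 0 →
        R X Y X Y = α)) ∧
    (∀ α : ℝ, (∀ X Y : V, ‖X‖ = 1 → ‖Y‖ = 1 → ⟪X, Y⟫ = 0 → ⟪X, J Y⟫ = 0 →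
        R X Y X Y = α) →
      ∀ X Y : V, ‖X‖ = 1 → ‖Y‖ = 1 → ⟪X, Y⟫ = 0 → ⟪X, J Y⟫ = 0 →
        R X Y X Y - R X Y (J X) (J Y) = α) := by
  have hd5 : 5 ≤ Module.finrank ℝ V := by omega
  -- basic inner product helper
  have hswap : ∀ X Y : V, ⟪X, J Y⟫ = -⟪J X, Y⟫ := by
    intro X Y
    have := hJiso X (J Y)
    rw [hJ2, inner_neg_right] at this
    linarith
  constructor
  · constructor
    · -- (i) → (ii)
      intro h
      -- symmetry of K
      have sym : ∀ A B : V, R A B A B = R B A B A := by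
        intro A B
        rw [hR1 B A B A, hR2 A B B A]
        ring
      -- equality of sectional curvatures with common leg
      have feq : ∀ A B B' : V, ‖A‖ = 1 → ‖B‖ = 1 → ‖B'‖ = 1 →
          ⟪A, B⟫ = 0 → ⟪A, J B⟫ = 0 → ⟪A, B'⟫ = 0 → ⟪A, J B'⟫ = 0 →
          R A B A B = R A B' A B' := by
        intro A B B' hA hB hB' h1 h2 h3 h4
        have := h A B B' h1 h2 h3 h4 (by rw [hB, hB'])
        rw [hax A B hA hB h1 h2, hax A B' hA hB' h3 h4] at this
        linarith
      obtain ⟨X₀, hX₀, -, -, -, -⟩ := exists_unit_orth hd5 (0 : V) 0 0 0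
      obtain ⟨Y₀, hY₀, hXY₀, hJXY₀, -, -⟩ := exists_unit_orth hd5 X₀ (J X₀) 0 0
      have hXJY₀ : ⟪X₀, J Y₀⟫ = 0 := by rw [hswap]; linarith
      refine ⟨R X₀ Y₀ X₀ Y₀, ?_⟩
      intro X Y hX hY hXY hXJY
      obtain ⟨W, hW, hXW, hJXW, hX₀W, hJX₀W⟩ := exists_unit_orth hd5 X (J X) X₀ (J X₀)
      have hXJW : ⟪X, J W⟫ = 0 := by rw [hswap]; linarith
      have hWX : ⟪W, X⟫ = 0 := by rw [real_inner_comm]; exact hXW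
      have hWJX : ⟪W, J X⟫ = 0 := by rw [hswap, real_inner_comm]; linarith
      have hWX₀ : ⟪W, X₀⟫ = 0 := by rw [real_inner_comm]; exact hX₀W
      have hX₀JW : ⟪X₀, J W⟫ = 0 := by rw [hswap]; linarith
      have hWJX₀ : ⟪W, J X₀⟫ = 0 := by rw [hswap, real_inner_comm]; linarith
      calc R X Y X Y = R X W X W := feq X Y W hX hY hW hXY hXJY hXW hXJW
        _ = R W X W X := sym X W
        _ = R W X₀ W X₀ := feq W X X₀ hW hX hX₀ hWX hWJX hWX₀ hWJX₀
        _ = R X₀ W X₀ W := sym W X₀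
        _ = R X₀ Y₀ X₀ Y₀ :=
            (feq X₀ Y₀ W hX₀ hY₀ hW hXY₀ hXJY₀ hX₀W hX₀JW).symm
    · -- (ii) → (i)
      rintro ⟨α, h2⟩
      have key : ∀ X Y : V, ⟪X, Y⟫ = 0 → ⟪X, J Y⟫ = 0 →
          R X Y X Y - R X Y (J X) (J Y) = ‖X‖ ^ 2 * ‖Y‖ ^ 2 * α := by
        intro X Y hxy hxjy
        by_cases hX0 : X = 0
        · simp [hX0]
        by_cases hY0 : Y = 0
        · simp [hY0]
        have hcn : ‖X‖ ≠ 0 := norm_ne_zero_iff.2 hX0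
        have hdn : ‖Y‖ ≠ 0 := norm_ne_zero_iff.2 hY0
        set x : V := ‖X‖⁻¹ • X with hx
        set y : V := ‖Y‖⁻¹ • Y with hy
        have hx1 : ‖x‖ = 1 := norm_smul_inv_norm hX0
        have hy1 : ‖y‖ = 1 := norm_smul_inv_norm hY0
        have hxy' : ⟪x, y⟫ = 0 := by
          rw [hx, hy, real_inner_smul_left, real_inner_smul_right, hxy]; ring
        have hxjy' : ⟪x, J y⟫ = 0 := by
          rw [hx, hy, map_smul, real_inner_smul_left, real_inner_smul_right, hxjy]; ring
        have hRxy := h2 x y hx1 hy1 hxy' hxjy'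
        have hax' := hax x y hx1 hy1 hxy' hxjy'
        rw [hx, hy] at hRxy hax'
        simp only [map_smul, LinearMap.smul_apply, smul_eq_mul] at hRxy hax'
        have hRJ : R X Y (J X) (J Y) = 0 := by
          field_simp at hax'
          exact hax'.trans (mul_zero _)
        rw [hRJ, ← hRxy]
        field_simp
        ring
      intro X Y Z h1 h2' h3 h4 h5
      rw [key X Y h1 h2', key X Z h3 h4, h5]
  · -- moreover
    intro α h2 X Y hX hY hXY hXJY
    rw [hax X Y hX hY hXY hXJY, h2 X Y hX hY hXY hXJY]
    ring
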